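/- arXiv:math/0104277 — 4 statements merged into one kernel-verified Lean document; each statement's English description precedes it below -/
import Mathlib

section
/- Let M = (ℕ ∪ ℤ, <) be the linear order consisting of a copy of ℕ followed by a copy of ℤ, where every element of the ℤ-part is greater than every element of the ℕ-part. Then the ℕ-part is implicitly definable in M: it is the unique nonempty proper initial segment of M that has no last element, and this property is expressible by an L ∪ {P}-sentence in the language L = {<} with a new unary predicate symbol P. -/
open FirstOrder Language Structure

/-- The single binary relation symbol `<`. -/
inductive OrdRel : ℕ → Type
  | lt : OrdRel 2

/-- The first-order language `L = {<}`. -/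
def Llt : Language := ⟨fun _ => Empty, OrdRel⟩

/-- The linear order `M = (ℕ ∪ ℤ, <)`: a copy of `ℕ` followed by a copy of `ℤ`,
every element of the `ℤ`-part being greater than every element of the `ℕ`-part. -/
abbrev NZ : Type := ℕ ⊕ₗ ℤ

/-- `NZ` as an `{<}`-structure. -/
instance : Llt.Structure NZ where
  funMap := fun {_} f => Empty.elim f
  RelMap := fun {_} r => match r with
    | OrdRel.lt => fun v => v 0 < v 1

/-- The `ℕ`-part of `NZ`. -/
def NPart : Set NZ := Set.range fun n : ℕ => toLex (Sum.inl n)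

/-- A single unary predicate symbol `P`. -/
inductive PRel : ℕ → Type
  | p : PRel 1

/-- The language consisting of the single unary predicate symbol `P`. -/
def LP : Language := ⟨fun _ => Empty, PRel⟩

/-- The `LP`-structure on `M` in which `P` is interpreted by the set `B`. -/
def pStruct (M : Type) (B : Set M) : LP.Structure M where
  funMap := fun {_} f => Empty.elim f
  RelMap := fun {_} r => match r with
    | PRel.p => fun v => v 0 ∈ B

/-- `A` is implicitly definable in the `L`-structure `M` if there is an
`L ∪ {P}`-sentence `φ(P)` with parameters from `M` (equivalently, an
`L ∪ {P}`-formula together with an assignment of its free variables in `M`),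
where `P` is a new unary predicate symbol, such that `A` is the unique subset
`B ⊆ M` with `(M, B) ⊨ φ(B)`. -/
def ImplicitlyDefinable (L : Language) (M : Type) [L.Structure M] (A : Set M) : Prop :=
  ∃ (n : ℕ) (φ : (L.sum LP).Formula (Fin n)) (v : Fin n → M),
    ∀ B : Set M,
      (letI : LP.Structure M := pStruct M B
       φ.Realize v) ↔ B = A

-- key characterization
lemma key (B : Set NZ) :
    (B.Nonempty ∧ B ≠ Set.univ ∧ (∀ x ∈ B, ∀ y, y < x → y ∈ B) ∧
      ∀ x ∈ B, ∃ y ∈ B, x < y) ↔ B = NPart := by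
  constructor
  · rintro ⟨⟨b, hb⟩, hne, hdown, hnomax⟩
    -- no inr element is in B
    have hnoinr : ∀ z : ℤ, toLex (Sum.inr z) ∉ B := by
      intro z hz
      apply hne
      have step : ∀ w : ℤ, toLex (Sum.inr w) ∈ B → toLex (Sum.inr (w + 1)) ∈ B := by
        intro w hw
        obtain ⟨y, hy, hlt⟩ := hnomax _ hw
        rcases y with y
        rcases y with n | w'
        · exact absurd hlt Sum.Lex.not_inr_lt_inl
        · have hww : w < w' := Sum.Lex.inr_lt_inr_iff.mp hlt
          rcases eq_or_lt_of_le (by omega : w + 1 ≤ w') with h | h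
          · rwa [h]
          · exact hdown _ hy _ (Sum.Lex.inr_lt_inr_iff.mpr h)
      have hk : ∀ k : ℕ, toLex (Sum.inr (z + k)) ∈ B := by
        intro k
        induction k with
        | zero => simpa using hz
        | succ n ih =>
          have := step _ ih
          rwa [show z + (n : ℤ) + 1 = z + ((n : ℕ) + 1 : ℕ) by push_cast; ring] at this
      ext x
      simp only [Set.mem_univ, iff_true]
      rcases x with x
      rcases x with n | w
      · exact hdown _ hz _ (Sum.Lex.inl_lt_inr _ _)
      · rcases le_or_gt w z with h | h
        · rcases eq_or_lt_of_le h with h | h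
          · rwa [h]
          · exact hdown _ hz _ (Sum.Lex.inr_lt_inr_iff.mpr h)
        · have := hk (w - z).toNat
          rwa [show z + ((w - z).toNat : ℤ) = w by omega] at this
    -- b is an inl
    obtain ⟨m, rfl⟩ : ∃ m : ℕ, b = toLex (Sum.inl m) := by
      rcases b with b
      rcases b with n | w
      · exact ⟨n, rfl⟩
      · exact absurd hb (hnoinr w)
    -- all inl n are in B
    have hall : ∀ n : ℕ, toLex (Sum.inl n) ∈ B := by
      have step : ∀ k : ℕ, toLex (Sum.inl k) ∈ B → toLex (Sum.inl (k + 1)) ∈ B := by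
        intro k hk
        obtain ⟨y, hy, hlt⟩ := hnomax _ hk
        rcases y with y
        rcases y with n | w
        · have hkn : k < n := Sum.Lex.inl_lt_inl_iff.mp hlt
          rcases eq_or_lt_of_le (by omega : k + 1 ≤ n) with h | h
          · rwa [h]
          · exact hdown _ hy _ (Sum.Lex.inl_lt_inl_iff.mpr h)
        · exact absurd hy (hnoinr w)
      have base : toLex (Sum.inl 0) ∈ B := by
        rcases Nat.eq_zero_or_pos m with h | h
        · rwa [h] at hb
        · exact hdown _ hb _ (Sum.Lex.inl_lt_inl_iff.mpr h)
      intro n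
      induction n with
      | zero => exact base
      | succ n ih => exact step _ ih
    ext x
    constructor
    · intro hx
      rcases x with x
      rcases x with n | w
      · exact ⟨n, rfl⟩
      · exact absurd hx (hnoinr w)
    · rintro ⟨n, rfl⟩
      exact hall n
  · rintro rfl
    refine ⟨⟨toLex (Sum.inl 0), ⟨0, rfl⟩⟩, ?_, ?_, ?_⟩
    · intro h
      have : toLex (Sum.inr (0 : ℤ)) ∈ NPart := h ▸ Set.mem_univ _
      obtain ⟨n, hn⟩ := this
      exact Sum.inl_ne_inr (toLex.injective hn)
    · rintro x ⟨n, rfl⟩ y hy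
      rcases y with y
      rcases y with m | w
      · exact ⟨m, rfl⟩
      · exact absurd hy Sum.Lex.not_inr_lt_inl
    · rintro x ⟨n, rfl⟩
      exact ⟨toLex (Sum.inl (n + 1)), ⟨n + 1, rfl⟩, Sum.Lex.inl_lt_inl_iff.mpr (by omega)⟩

/-- The `ℕ`-part of `M = (ℕ ∪ ℤ, <)` is the unique nonempty proper
initial segment of `M` with no last element, and it is implicitly definable in `M`
(this property being expressible by an `L ∪ {P}`-sentence). -/
theorem nPart_implicitly_definable :
    (∀ B : Set NZ,
        (B.Nonempty ∧ B ≠ Set.univ ∧ (∀ x ∈ B, ∀ y, y < x → y ∈ B) ∧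
          ∀ x ∈ B, ∃ y ∈ B, x < y) ↔ B = NPart) ∧
    ImplicitlyDefinable Llt NZ NPart := by
  refine ⟨key, ?_⟩
  classical
  let ltR : (Llt.sum LP).Relations 2 := Sum.inl OrdRel.lt
  let pR : (Llt.sum LP).Relations 1 := Sum.inr PRel.p
  refine ⟨0, ?_, default, ?_⟩
  · exact
      (BoundedFormula.ex (pR.boundedFormula₁ (&0))) ⊓
      (BoundedFormula.ex (∼(pR.boundedFormula₁ (&0)))) ⊓
      (BoundedFormula.all (BoundedFormula.all
        ((pR.boundedFormula₁ (&0) ⊓ ltR.boundedFormula₂ (&1) (&0)) ⟹ pR.boundedFormula₁ (&1)))) ⊓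
      (BoundedFormula.all (pR.boundedFormula₁ (&0) ⟹
        BoundedFormula.ex (pR.boundedFormula₁ (&1) ⊓ ltR.boundedFormula₂ (&0) (&1))))
  · intro B
    rw [← key B]
    letI : LP.Structure NZ := pStruct NZ B
    simp only [Formula.Realize, BoundedFormula.realize_inf, BoundedFormula.realize_ex,
      BoundedFormula.realize_all, BoundedFormula.realize_not, BoundedFormula.realize_imp,
      BoundedFormula.realize_rel₁, BoundedFormula.realize_rel₂, Term.realize_var,
      Function.comp_apply, Sum.elim_inr, Fin.snoc, Fin.val_zero, Fin.val_one, Nat.lt_irrefl,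
      dite_false, dite_true, cast_eq, Nat.zero_lt_one, Fin.castSucc_castLT, Matrix.cons_val_zero,
      Matrix.cons_val_one, Matrix.head_cons, dif_pos, dif_neg, Fin.coe_castLT]
    have hrel1 : ∀ x : NZ, RelMap (L := Llt.sum LP) (M := NZ) pR ![x] ↔ x ∈ B := fun x => Iff.rfl
    have hrel2 : ∀ x y : NZ, RelMap (L := Llt.sum LP) (M := NZ) ltR ![x, y] ↔ x < y :=
      fun x y => Iff.rfl
    simp only [hrel1, hrel2]
    constructor
    · rintro ⟨⟨⟨⟨x, hx⟩, y, hy⟩, hdown⟩, hnomax⟩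
      exact ⟨⟨x, hx⟩, fun h => hy (h ▸ Set.mem_univ y),
        fun a ha c hc => hdown a c ⟨ha, hc⟩, hnomax⟩
    · rintro ⟨⟨x, hx⟩, hne, hdown, hnomax⟩
      refine ⟨⟨⟨⟨x, hx⟩, ?_⟩, fun a c h => hdown a h.1 c h.2⟩, hnomax⟩
      by_contra h
      push_neg at h
      exact hne (Set.eq_univ_of_forall h)
end

section
/- Let T be a complete theory in a countable language L containing <, 0, S with a partial definable binary function F as in the standing assumptions, and let M ⊨ T. If φ(x, ā) and ψ(x, ā) are formulas with parameters from M such that the disjunction φ ∨ ψ is Γ^sind_F-big in M, then φ is Γ^sind_F-big in M or ψ is Γ^sind_F-big in M. -/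
open FirstOrder Language Structure

/-- The interpretation of the distinguished binary relation symbol `<`. -/
def ltI (L : Language) (ltS : L.Relations 2) {M : Type} [L.Structure M] (a b : M) : Prop :=
  Structure.RelMap ltS ![a, b]

/-- The interpretation of the distinguished constant symbol `0`. -/
def zeroI (L : Language) (zeroS : L.Constants) (M : Type) [L.Structure M] : M :=
  Structure.funMap zeroS ![]

/-- The interpretation of the distinguished unary function symbol `S`. -/
def succI (L : Language) (succS : L.Functions 1) {M : Type} [L.Structure M] (a : M) : M :=
  Structure.funMap succS ![a]

/-- The interpretations `Sⁿ(0)` of the "numerals". -/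
def stdI (L : Language) (zeroS : L.Constants) (succS : L.Functions 1)
    (M : Type) [L.Structure M] : ℕ → M
  | 0 => zeroI L zeroS M
  | n + 1 => succI L succS (stdI L zeroS succS M n)

/-- The standing assumptions: `L` is a countable first-order language containing `<`,
`0` and `S`; `T` is a complete `L`-theory; `Fg(x, y, z)` defines the graph of a partial
binary function `F(x, y)`; and `T` proves (equivalently, since `T` is complete, every
model of `T` satisfies): the partial functionality of `F`; `<` is a linear order with
first element `0`; `S x` is the immediate `<`-successor of `x`; and, for each `n ∈ ω`,
for all pairwise distinct `y₁, …, yₙ` and all `z₁, …, zₙ` there exists `x` with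
`F(x, yᵢ) = zᵢ` for all `i ≤ n`. -/
def StandingAssumptions (L : Language) (ltS : L.Relations 2) (zeroS : L.Constants)
    (succS : L.Functions 1) (T : L.Theory) (Fg : L.Formula (Fin 3)) : Prop :=
  Countable L.Symbols ∧ T.IsComplete ∧
    ∀ (M : Type) [L.Structure M], M ⊨ T →
      (∀ x y z z' : M, Fg.Realize ![x, y, z] → Fg.Realize ![x, y, z'] → z = z') ∧
      ((∀ x : M, ¬ ltI L ltS x x) ∧
       (∀ x y z : M, ltI L ltS x y → ltI L ltS y z → ltI L ltS x z) ∧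
       (∀ x y : M, ltI L ltS x y ∨ x = y ∨ ltI L ltS y x) ∧
       (∀ x : M, x = zeroI L zeroS M ∨ ltI L ltS (zeroI L zeroS M) x)) ∧
      (∀ x : M, ltI L ltS x (succI L succS x) ∧
        ∀ y : M, ltI L ltS x y → succI L succS x = y ∨ ltI L ltS (succI L succS x) y) ∧
      (∀ (n : ℕ) (ys : Fin n → M), Function.Injective ys → ∀ zs : Fin n → M,
        ∃ x : M, ∀ i, Fg.Realize ![x, ys i, zs i])

/-- `(M, I) ⊨ ψ*(P)`: the set `I` is a cut (nonempty proper initial segment closed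
under `S`), and for no `x` and `z ∈ I` is the set `{F(x, y) : y} ∩ I` unbounded in
`I`, i.e. `∀x∀z[P(z) → ∃w(P(w) ∧ ∀y(P(F(x,y)) → F(x,y) < w))]` (with the partial
function `F` given by its graph `Fg`). -/
def PsiStar (L : Language) (ltS : L.Relations 2) (zeroS : L.Constants)
    (succS : L.Functions 1) (Fg : L.Formula (Fin 3))
    (M : Type) [L.Structure M] (I : Set M) : Prop :=
  (I ≠ Set.univ ∧ zeroI L zeroS M ∈ I ∧
    (∀ x y : M, y ∈ I → ltI L ltS x y → x ∈ I) ∧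
    ∀ x ∈ I, succI L succS x ∈ I) ∧
  ∀ x z : M, z ∈ I → ∃ w ∈ I, ∀ y v : M, Fg.Realize ![x, y, v] → v ∈ I → ltI L ltS v w

/-- `M` is `ψ*`-appropriate: `M ≠ {Sⁿ(0) : n ∈ ω}`, and whenever `(M, I) ⊨ ψ*(P)`,
either `I = {Sⁿ(0) : n ∈ ω}` or `I` is definable in `M` by an `L`-formula with
parameters. -/
def PsiAppropriate (L : Language) (ltS : L.Relations 2) (zeroS : L.Constants)
    (succS : L.Functions 1) (Fg : L.Formula (Fin 3)) (M : Type) [L.Structure M] : Prop :=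
  Set.range (stdI L zeroS succS M) ≠ Set.univ ∧
    ∀ I : Set M, PsiStar L ltS zeroS succS Fg M I →
      I = Set.range (stdI L zeroS succS M) ∨ Set.Definable₁ (Set.univ : Set M) L I


/-- `N` is `ℵ₁`-saturated (equivalently `|T|⁺`-saturated, for a complete theory `T`
in a countable language): every finitely satisfiable set of formulas in one free
variable with parameters from a countable subset `A ⊆ N` is satisfiable in `N`. -/
def AlephOneSaturated (L : Language) (N : Type) [L.Structure N] : Prop :=
  ∀ A : Set N, A.Countable →
    ∀ S : Set (L.Formula (↥A ⊕ Fin 1)),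
      (∀ S₀ : Finset (L.Formula (↥A ⊕ Fin 1)), ↑S₀ ⊆ S →
        ∃ x : N, ∀ φ ∈ S₀, Formula.Realize φ (Sum.elim Subtype.val fun _ => x)) →
      ∃ x : N, ∀ φ ∈ S, Formula.Realize φ (Sum.elim Subtype.val fun _ => x)

/-- The witnessing condition for `Γ^sind_F`-bigness of the formula `φ(x, ā)` (with
parameters `ā` from `M`) in a given elementary extension `e : M ≺ N`: there is a set
`A ⊆ N` with `|A| ≤ |T| (= ℵ₀)` such that for any finitely many pairwise distinct
`a₁, …, aₙ ∈ N \ A` and any `b₁, …, bₙ ∈ N` there is `x` with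
`N ⊨ φ(x, ā) ∧ ⋀ᵢ F(x, aᵢ) = bᵢ` (the partial function `F` given by its graph `Fg`). -/
def BigWitness (L : Language) (Fg : L.Formula (Fin 3)) {M N : Type}
    [L.Structure M] [L.Structure N] (e : M ↪ₑ[L] N) {k : ℕ}
    (φ : L.Formula (Fin k ⊕ Fin 1)) (a : Fin k → M) : Prop :=
  ∃ A : Set N, A.Countable ∧
    ∀ (n : ℕ) (as : Fin n → N), Function.Injective as → (∀ i, as i ∉ A) →
      ∀ bs : Fin n → N, ∃ x : N,
        Formula.Realize φ (Sum.elim (fun i => e (a i)) fun _ => x) ∧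
        ∀ i, Fg.Realize ![x, as i, bs i]

/-- `φ(x, ā)` is `Γ^sind_F`-big in `M`: in some `|T|⁺`-saturated elementary extension
`N ≻ M` the witnessing condition holds. -/
def IsBig (L : Language) (Fg : L.Formula (Fin 3)) (M : Type) [L.Structure M] {k : ℕ}
    (φ : L.Formula (Fin k ⊕ Fin 1)) (a : Fin k → M) : Prop :=
  ∃ (N : Type) (_ : L.Structure N) (e : M ↪ₑ[L] N),
    AlephOneSaturated L N ∧ BigWitness L Fg e φ a


/-- Under the standing assumptions, if `φ(x, ā) ∨ ψ(x, ā)` is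
`Γ^sind_F`-big in `M ⊨ T`, then `φ` is `Γ^sind_F`-big in `M` or `ψ` is `Γ^sind_F`-big
in `M`. -/
theorem isBig_sup_of_isBig
    (L : FirstOrder.Language.{0, 0}) (ltS : L.Relations 2) (zeroS : L.Constants)
    (succS : L.Functions 1) (T : L.Theory) (Fg : L.Formula (Fin 3))
    (h : StandingAssumptions L ltS zeroS succS T Fg)
    (M : Type) [L.Structure M] (hM : M ⊨ T)
    (k : ℕ) (φ ψ : L.Formula (Fin k ⊕ Fin 1)) (a : Fin k → M)
    (hbig : IsBig L Fg M (φ ⊔ ψ) a) :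
    IsBig L Fg M φ a ∨ IsBig L Fg M ψ a := by
  classical
  obtain ⟨N, iN, e, hsat, A, hAc, hA⟩ := hbig
  by_cases hφ : ∀ (n : ℕ) (as : Fin n → N), Function.Injective as → (∀ i, as i ∉ A) →
      ∀ bs : Fin n → N, ∃ x : N,
        Formula.Realize φ (Sum.elim (fun i => e (a i)) fun _ => x) ∧
        ∀ i, Fg.Realize ![x, as i, bs i]
  · exact Or.inl ⟨N, iN, e, hsat, A, hAc, hφ⟩
  · push_neg at hφ
    obtain ⟨n₀, as₀, hinj₀, hout₀, bs₀, hbad⟩ := hφ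
    refine Or.inr ⟨N, iN, e, hsat, A ∪ Set.range as₀,
      hAc.union (Set.countable_range _), ?_⟩
    intro n as hinj hout bs
    have hdisj : ∀ i j, as i ≠ as₀ j := fun i j hh =>
      hout i (Set.mem_union_right _ ⟨j, hh.symm⟩)
    have houtA : ∀ i, Fin.append as as₀ i ∉ A := by
      intro i
      refine Fin.addCases (fun i => ?_) (fun i => ?_) i
      · rw [Fin.append_left]
        exact fun hmem => hout i (Set.mem_union_left _ hmem)
      · rw [Fin.append_right]; exact hout₀ i
    have hinj' : Function.Injective (Fin.append as as₀) := by
      intro i j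
      refine Fin.addCases (fun i' => ?_) (fun i' => ?_) i <;>
        refine Fin.addCases (fun j' => ?_) (fun j' => ?_) j <;> intro hij
      · rw [Fin.append_left, Fin.append_left] at hij
        exact congrArg _ (hinj hij)
      · rw [Fin.append_left, Fin.append_right] at hij
        exact absurd hij (hdisj i' j')
      · rw [Fin.append_right, Fin.append_left] at hij
        exact absurd hij.symm (hdisj j' i')
      · rw [Fin.append_right, Fin.append_right] at hij
        exact congrArg _ (hinj₀ hij)
    obtain ⟨x, hx1, hx2⟩ := hA (n + n₀) (Fin.append as as₀) hinj' houtA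
      (Fin.append bs bs₀)
    rw [Formula.realize_sup] at hx1
    rcases hx1 with hx1 | hx1
    · exfalso
      obtain ⟨i, hi⟩ := hbad x hx1
      refine hi ?_
      have := hx2 (Fin.natAdd n i)
      rwa [Fin.append_right, Fin.append_right] at this
    · refine ⟨x, hx1, fun i => ?_⟩
      have := hx2 (Fin.castAdd n₀ i)
      rwa [Fin.append_left, Fin.append_left] at this
end

section
/- Let T be a complete theory in a countable language L containing <, 0, S with a partial definable binary function F as in the standing assumptions. Then Γ^sind_F-bigness is a notion of bigness for T: for every model M ⊨ T and all formulas φ(x, ȳ), ψ(x, ȳ): (1) if ∀x(φ → ψ) holds and φ is Γ^sind_F-big then ψ is Γ^sind_F-big; (2) if φ ∨ ψ is Γ^sind_F-big then φ is Γ^sind_F-big or ψ is Γ^sind_F-big; (3) if φ is Γ^sind_F-big then φ has at least two solutions in M; (4) the formula x = x is Γ^sind_F-big. -/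
open FirstOrder Language Structure

open Cardinal Filter in
lemma countable_formula (L : FirstOrder.Language.{0,0}) (hL : Countable L.Symbols)
    (α : Type) [Countable α] : Countable (L.Formula α) := by
  have h1 : Countable (Σ n, L.BoundedFormula α n) := by
    rw [← Cardinal.mk_le_aleph0_iff]
    refine (BoundedFormula.card_le).trans ?_
    simp only [Cardinal.lift_id]
    refine max_le le_rfl ?_
    have h2 : L.card ≤ ℵ₀ := by
      rw [Language.card, Cardinal.mk_le_aleph0_iff]; exact hL
    have h3 : (#α) ≤ ℵ₀ := Cardinal.mk_le_aleph0
    calc #α + L.card ≤ ℵ₀ + ℵ₀ := add_le_add h3 h2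
      _ = ℵ₀ := Cardinal.aleph0_add_aleph0
  exact (sigma_mk_injective (i := 0)).countable

open Filter in
noncomputable def diagEmb (L : FirstOrder.Language.{0,0}) (M : Type) [L.Structure M] [Nonempty M]
    (u : Ultrafilter ℕ) : M ↪ₑ[L] ((u : Filter ℕ).Product (fun _ => M)) where
  toFun m := (↑(fun _ : ℕ => m) : (u : Filter ℕ).Product (fun _ => M))
  map_formula' := by
    intro n φ x
    have := Ultraproduct.realize_formula_cast (u := u) φ (fun j (_ : ℕ) => x j)
    simp only [eventually_const] at this
    exact this

lemma stdI_inj (L : FirstOrder.Language.{0,0}) (ltS : L.Relations 2) (zeroS : L.Constants)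
    (succS : L.Functions 1) (T : L.Theory) (Fg : L.Formula (Fin 3))
    (h : StandingAssumptions L ltS zeroS succS T Fg)
    (M : Type) [L.Structure M] (hM : M ⊨ T) : Function.Injective (stdI L zeroS succS M) := by
  obtain ⟨-, -, hmod⟩ := h
  obtain ⟨-, ⟨hirr, htrans, -, -⟩, hsucc, -⟩ := hmod M hM
  have key : ∀ n m : ℕ, m < n → ltI L ltS (stdI L zeroS succS M m) (stdI L zeroS succS M n) := by
    intro n
    induction n with
    | zero => intro m hm; exact absurd hm (Nat.not_lt_zero m)
    | succ n ih =>
      intro m hm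
      rcases Nat.lt_succ_iff_lt_or_eq.1 hm with hm | rfl
      · exact htrans _ _ _ (ih m hm) (hsucc _).1
      · exact (hsucc _).1
  intro m n hmn
  by_contra hne
  rcases Nat.lt_or_ge m n with hlt | hge
  · have hk := key n m hlt; rw [hmn] at hk; exact hirr _ hk
  · have hk := key m n (lt_of_le_of_ne hge (Ne.symm hne)); rw [hmn] at hk; exact hirr _ hk

lemma exists_not_mem_countable (L : FirstOrder.Language.{0,0}) (N : Type) [L.Structure N]
    [Infinite N] (hsat : AlephOneSaturated L N) (A : Set N) (hA : A.Countable) :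
    ∃ x : N, x ∉ A := by
  classical
  let nf : ↥A → L.Formula (↥A ⊕ Fin 1) :=
    fun a => ∼(Term.equal (Term.var (Sum.inl a)) (Term.var (Sum.inr 0)))
  have hfs : ∀ S₀ : Finset (L.Formula (↥A ⊕ Fin 1)), ↑S₀ ⊆ Set.range nf →
      ∃ x : N, ∀ φ ∈ S₀, Formula.Realize φ (Sum.elim Subtype.val fun _ => x) := by
    intro S₀ hS₀
    have hmem : ∀ φ : {φ // φ ∈ S₀}, ∃ a : ↥A, nf a = φ.1 := fun φ => hS₀ φ.2
    choose g hg using hmem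
    obtain ⟨x, hx⟩ := ((Set.finite_range (fun φ => (g φ).1)).infinite_compl).nonempty
    refine ⟨x, fun φ hφ => ?_⟩
    have h3 : Formula.Realize (nf (g ⟨φ, hφ⟩)) (Sum.elim Subtype.val fun _ => x) := by
      simp only [nf, Formula.realize_not, Formula.realize_equal, Term.realize_var,
        Sum.elim_inl, Sum.elim_inr]
      exact fun heq => hx ⟨⟨φ, hφ⟩, heq⟩
    rw [hg ⟨φ, hφ⟩] at h3
    exact h3
  obtain ⟨x, hx⟩ := hsat A hA (Set.range nf) hfs
  refine ⟨x, fun hxA => ?_⟩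
  have h2 := hx _ ⟨⟨x, hxA⟩, rfl⟩
  simp [nf] at h2

open Filter in
lemma ultrapower_saturated (L : FirstOrder.Language.{0,0}) (hL : Countable L.Symbols)
    (M : Type) [L.Structure M] [Nonempty M] :
    AlephOneSaturated L (((Filter.hyperfilter ℕ : Ultrafilter ℕ) : Filter ℕ).Product
      (fun _ => M)) := by
  classical
  set u : Ultrafilter ℕ := Filter.hyperfilter ℕ with hu
  set N := ((u : Filter ℕ).Product (fun _ : ℕ => M)) with hN
  set s : Setoid (ℕ → M) := (u : Filter ℕ).productSetoid (fun _ : ℕ => M) with hs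
  intro A hA S hfs
  haveI := hA.to_subtype
  haveI : Countable (L.Formula (↥A ⊕ Fin 1)) := countable_formula L hL _
  rcases S.eq_empty_or_nonempty with rfl | hne
  · obtain ⟨x⟩ : Nonempty N := inferInstance
    exact ⟨x, by simp⟩
  obtain ⟨f, hf⟩ := (Set.to_countable S).exists_eq_range hne
  choose rep hrep using fun a : ↥A => Quotient.exists_rep (a.val : N)
  have los : ∀ (φ : L.Formula (↥A ⊕ Fin 1)) (x : ℕ → M),
      Formula.Realize φ (Sum.elim Subtype.val (fun _ => (Quotient.mk s x : N))) ↔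
      ∀ᶠ j in (u : Filter ℕ),
        Formula.Realize φ (Sum.elim (fun a => rep a j) (fun _ => x j)) := by
    intro φ x
    have hcast := Ultraproduct.realize_formula_cast (u := u) φ
      (Sum.elim rep (fun _ : Fin 1 => x))
    have h1 : (fun i => (↑(Sum.elim rep (fun _ : Fin 1 => x) i) : N))
        = Sum.elim Subtype.val (fun _ => (Quotient.mk s x : N)) := by
      funext i; cases i with
      | inl a => exact hrep a
      | inr _ => rfl
    rw [h1] at hcast
    refine hcast.trans ?_
    refine eventually_congr (Eventually.of_forall fun j => ?_)
    have h2 : (fun i => Sum.elim rep (fun _ : Fin 1 => x) i j)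
        = Sum.elim (fun a => rep a j) (fun _ => x j) := by
      funext i; cases i with
      | inl a => rfl
      | inr _ => rfl
    rw [h2]
  have hG : ∀ n : ℕ, ∀ᶠ j in (u : Filter ℕ), ∃ c : M, ∀ i ≤ n,
      Formula.Realize (f i) (Sum.elim (fun a => rep a j) (fun _ => c)) := by
    intro n
    obtain ⟨x, hx⟩ := hfs ((Finset.range (n+1)).image f) (by
      intro φ hφ
      simp only [Finset.coe_image, Set.mem_image, Finset.coe_range, Set.mem_Iio] at hφ
      obtain ⟨i, _, rfl⟩ := hφ
      rw [hf]; exact ⟨i, rfl⟩)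
    obtain ⟨x', rfl⟩ := Quotient.exists_rep x
    have hev : ∀ᶠ j in (u : Filter ℕ), ∀ i ∈ Set.Iic n,
        Formula.Realize (f i) (Sum.elim (fun a => rep a j) (fun _ => x' j)) := by
      rw [Filter.eventually_all_finite (Set.finite_Iic n)]
      intro i hi
      rw [← los]
      exact hx (f i) (Finset.mem_image_of_mem f (Finset.mem_range.2 (Nat.lt_succ_of_le hi)))
    exact hev.mono fun j hj => ⟨x' j, fun i hi => hj i hi⟩
  set P : ℕ → ℕ → Prop := fun n j => ∃ c : M, ∀ i ≤ n,
      Formula.Realize (f i) (Sum.elim (fun a => rep a j) (fun _ => c)) with hP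
  let y : ℕ → M := fun j =>
    if h : P (Nat.findGreatest (fun n => P n j) j) j then h.choose else Classical.arbitrary M
  refine ⟨(Quotient.mk s y : N), ?_⟩
  intro φ hφ
  rw [hf] at hφ
  obtain ⟨n, rfl⟩ := hφ
  rw [los]
  have hbig : ∀ᶠ j in (u : Filter ℕ), (P n j ∧ n ≤ j) :=
    (hG n).and ((eventually_ge_atTop n).filter_mono Nat.hyperfilter_le_atTop)
  refine hbig.mono fun j hj => ?_
  obtain ⟨hPj, hnj⟩ := hj
  have hPm : P (Nat.findGreatest (fun n => P n j) j) j :=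
    Nat.findGreatest_spec (P := fun n => P n j) hnj hPj
  have hge : n ≤ Nat.findGreatest (fun n => P n j) j :=
    Nat.le_findGreatest hnj hPj
  have hy : y j = hPm.choose := dif_pos hPm
  rw [hy]
  exact hPm.choose_spec n hge

/-- Under the standing assumptions, `Γ^sind_F`-bigness is a notion of
bigness for `T`: (1) it is monotone; (2) if `φ ∨ ψ` is big then `φ` is big or `ψ` is
big; (3) a big formula has at least two solutions in `M`; (4) `x = x` is big. -/
theorem isBig_is_notion_of_bigness
    (L : FirstOrder.Language.{0, 0}) (ltS : L.Relations 2) (zeroS : L.Constants)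
    (succS : L.Functions 1) (T : L.Theory) (Fg : L.Formula (Fin 3))
    (h : StandingAssumptions L ltS zeroS succS T Fg)
    (M : Type) [L.Structure M] (hM : M ⊨ T) (k : ℕ) (a : Fin k → M) :
    (∀ φ ψ : L.Formula (Fin k ⊕ Fin 1),
      (∀ x : M, Formula.Realize φ (Sum.elim a fun _ => x) →
        Formula.Realize ψ (Sum.elim a fun _ => x)) →
      IsBig L Fg M φ a → IsBig L Fg M ψ a) ∧
    (∀ φ ψ : L.Formula (Fin k ⊕ Fin 1),
      IsBig L Fg M (φ ⊔ ψ) a → IsBig L Fg M φ a ∨ IsBig L Fg M ψ a) ∧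
    (∀ φ : L.Formula (Fin k ⊕ Fin 1), IsBig L Fg M φ a →
      ∃ x y : M, x ≠ y ∧ Formula.Realize φ (Sum.elim a fun _ => x) ∧
        Formula.Realize φ (Sum.elim a fun _ => y)) ∧
    IsBig L Fg M
      (Term.equal (Term.var (Sum.inr 0)) (Term.var (Sum.inr (0 : Fin 1)))) a := by
  classical
  obtain ⟨hcnt, hcomp, hmod⟩ := h
  refine ⟨?_, ?_, ?_, ?_⟩
  -- (1) monotonicity
  · intro φ ψ himp hbig
    obtain ⟨N, iN, e, hsat, A, hA, hwit⟩ := hbig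
    refine ⟨N, iN, e, hsat, A, hA, ?_⟩
    intro n as hinj hout bs
    obtain ⟨x, hx1, hx2⟩ := hwit n as hinj hout bs
    refine ⟨x, ?_, hx2⟩
    have hM1 : (Formula.iAlls (Fin 1) (φ.imp ψ)).Realize a := by
      rw [Formula.realize_iAlls]
      intro i
      have h0 : (fun v : Fin k ⊕ Fin 1 => Sum.elim a i v) = Sum.elim a (fun _ => i 0) := by
        funext v; cases v with
        | inl j => rfl
        | inr j => simp [Subsingleton.elim j 0]
      rw [h0, Formula.realize_imp]
      exact himp (i 0)
    have hN1 := (e.map_formula _ a).2 hM1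
    rw [Formula.realize_iAlls] at hN1
    exact (Formula.realize_imp.1 (hN1 (fun _ => x))) hx1
  -- (2) disjunction
  · intro φ ψ hbig
    by_contra hcon
    push_neg at hcon
    obtain ⟨hnφ, hnψ⟩ := hcon
    obtain ⟨N, iN, e, hsat, hwit⟩ := hbig
    have hφ' : ¬ BigWitness L Fg e φ a := fun hw => hnφ ⟨N, iN, e, hsat, hw⟩
    have hψ' : ¬ BigWitness L Fg e ψ a := fun hw => hnψ ⟨N, iN, e, hsat, hw⟩
    rw [BigWitness] at hφ' hψ'
    push_neg at hφ' hψ'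
    obtain ⟨A, hA, hwit'⟩ := hwit
    obtain ⟨n₁, as₁, hinj₁, hout₁, bs₁, hno₁⟩ := hφ' A hA
    obtain ⟨n₂, as₂, hinj₂, hout₂, bs₂, hno₂⟩ := hψ' (A ∪ Set.range as₁)
      (hA.union (Set.finite_range as₁).countable)
    set as : Fin (n₁ + n₂) → N := fun i => Sum.elim as₁ as₂ (finSumFinEquiv.symm i) with has
    set bs : Fin (n₁ + n₂) → N := fun i => Sum.elim bs₁ bs₂ (finSumFinEquiv.symm i) with hbs
    have hinjS : Function.Injective (Sum.elim as₁ as₂) := by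
      rintro (i | i) (j | j) hij
      · rw [hinj₁ hij]
      · exact ((hout₂ j) (Or.inr ⟨i, hij⟩)).elim
      · exact ((hout₂ i) (Or.inr ⟨j, hij.symm⟩)).elim
      · rw [hinj₂ hij]
    have hinj : Function.Injective as := fun i j hij =>
      finSumFinEquiv.symm.injective (hinjS hij)
    have hout : ∀ i, as i ∉ A := by
      intro i
      show Sum.elim as₁ as₂ (finSumFinEquiv.symm i) ∉ A
      rcases h' : finSumFinEquiv.symm i with i' | i'
      · exact hout₁ i'
      · exact fun hAi => hout₂ i' (Or.inl hAi)
    obtain ⟨x, hx1, hx2⟩ := hwit' (n₁ + n₂) as hinj hout bs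
    rw [Formula.realize_sup] at hx1
    have key₁ : ∀ i : Fin n₁, Fg.Realize ![x, as₁ i, bs₁ i] := by
      intro i
      simpa [has, hbs] using hx2 (finSumFinEquiv (Sum.inl i))
    have key₂ : ∀ i : Fin n₂, Fg.Realize ![x, as₂ i, bs₂ i] := by
      intro i
      simpa [has, hbs] using hx2 (finSumFinEquiv (Sum.inr i))
    cases hx1 with
    | inl h1 => obtain ⟨i, hi⟩ := hno₁ x h1; exact hi (key₁ i)
    | inr h1 => obtain ⟨i, hi⟩ := hno₂ x h1; exact hi (key₂ i)
  -- (3) two solutions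
  · intro φ hbig
    obtain ⟨N, iN, e, hsat, A, hA, hwit⟩ := hbig
    have hNT : N ⊨ T := (e.theory_model_iff T).1 hM
    haveI : Infinite N := Infinite.of_injective _
      (stdI_inj L ltS zeroS succS T Fg ⟨hcnt, hcomp, hmod⟩ N hNT)
    obtain ⟨a₁, ha₁⟩ := exists_not_mem_countable L N hsat A hA
    obtain ⟨hF, hord, hsucc, hsol⟩ := hmod N hNT
    set b₁ := zeroI L zeroS N with hb₁
    set b₂ := succI L succS b₁ with hb₂
    have hb : b₁ ≠ b₂ := by
      intro hbb
      have hlt := (hsucc b₁).1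
      rw [← hb₂, ← hbb] at hlt
      exact hord.1 b₁ hlt
    obtain ⟨x₁, hx₁, hf₁⟩ := hwit 1 (fun _ => a₁)
      (fun i j _ => Subsingleton.elim i j) (fun _ => ha₁) (fun _ => b₁)
    obtain ⟨x₂, hx₂, hf₂⟩ := hwit 1 (fun _ => a₁)
      (fun i j _ => Subsingleton.elim i j) (fun _ => ha₁) (fun _ => b₂)
    have hxx : x₁ ≠ x₂ := by
      intro hxe
      apply hb
      refine hF x₁ a₁ b₁ b₂ (hf₁ 0) ?_
      rw [hxe]; exact hf₂ 0
    set r₁ : (Fin k ⊕ Fin 1) → (Fin k ⊕ Fin 2) := Sum.map id (fun _ => 0) with hr₁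
    set r₂ : (Fin k ⊕ Fin 1) → (Fin k ⊕ Fin 2) := Sum.map id (fun _ => 1) with hr₂
    set θ : L.Formula (Fin k ⊕ Fin 2) :=
      (φ.relabel r₁ ⊓ φ.relabel r₂) ⊓
        ∼(Term.equal (Term.var (Sum.inr 0)) (Term.var (Sum.inr 1))) with hθ
    set χ := Formula.iExs (Fin 2) θ with hχ
    have hcomp₁ : ∀ (w : Fin k → N) (i : Fin 2 → N),
        (Sum.elim w i ∘ r₁) = Sum.elim w (fun _ => i 0) := by
      intro w i; funext v; cases v with
      | inl j => rfl
      | inr j => rfl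
    have hcomp₂ : ∀ (w : Fin k → N) (i : Fin 2 → N),
        (Sum.elim w i ∘ r₂) = Sum.elim w (fun _ => i 1) := by
      intro w i; funext v; cases v with
      | inl j => rfl
      | inr j => rfl
    have hNχ : χ.Realize (⇑e ∘ a) := by
      rw [hχ, Formula.realize_iExs]
      refine ⟨![x₁, x₂], ?_⟩
      rw [hθ]
      simp only [Formula.realize_inf, Formula.realize_relabel, Formula.realize_not,
        Formula.realize_equal, Term.realize_var]
      rw [hcomp₁, hcomp₂]
      refine ⟨⟨?_, ?_⟩, ?_⟩
      · exact hx₁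
      · exact hx₂
      · simpa using hxx
    have hMχ := (e.map_formula χ a).1 hNχ
    rw [hχ, Formula.realize_iExs] at hMχ
    obtain ⟨i, hi⟩ := hMχ
    rw [hθ] at hi
    simp only [Formula.realize_inf, Formula.realize_relabel, Formula.realize_not,
      Formula.realize_equal, Term.realize_var] at hi
    have hcomp₁' : ∀ (w : Fin k → M) (i : Fin 2 → M),
        (Sum.elim w i ∘ r₁) = Sum.elim w (fun _ => i 0) := by
      intro w i; funext v; cases v with
      | inl j => rfl
      | inr j => rfl
    have hcomp₂' : ∀ (w : Fin k → M) (i : Fin 2 → M),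
        (Sum.elim w i ∘ r₂) = Sum.elim w (fun _ => i 1) := by
      intro w i; funext v; cases v with
      | inl j => rfl
      | inr j => rfl
    rw [hcomp₁', hcomp₂'] at hi
    obtain ⟨⟨h1, h2⟩, h3⟩ := hi
    refine ⟨i 0, i 1, ?_, h1, h2⟩
    simpa using h3
  -- (4) x = x is big
  · haveI : Nonempty M := ⟨zeroI L zeroS M⟩
    set u : Ultrafilter ℕ := Filter.hyperfilter ℕ with hu
    set N := ((u : Filter ℕ).Product (fun _ : ℕ => M)) with hN
    set e := diagEmb L M u with he
    have hNT : N ⊨ T := (e.theory_model_iff T).1 hM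
    obtain ⟨-, -, -, hsol⟩ := hmod N hNT
    refine ⟨N, inferInstance, e, ultrapower_saturated L hcnt M, ∅, Set.countable_empty, ?_⟩
    intro n as hinj _ bs
    obtain ⟨x, hx⟩ := hsol n as hinj bs
    refine ⟨x, ?_, hx⟩
    simp
end

section
/- The Γ^sind_F-bigness of a formula φ(x, ā) in a model M ⊨ T does not depend on the choice of |T|⁺-saturated elementary extension: if the defining condition holds in some |T|⁺-saturated elementary extension N ≻ M, then it holds in every |T|⁺-saturated elementary extension of M. -/
open FirstOrder Language Structure

namespace BigAux

universe u
variable {L : FirstOrder.Language.{0,0}} (Fg : L.Formula (Fin 3)) {k : ℕ} (φ : L.Formula (Fin k ⊕ Fin 1))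

/-- Conjunction over a finset. -/
noncomputable def finInf {α β : Type} {n : ℕ} (s : Finset β) (f : β → L.BoundedFormula α n) :
    L.BoundedFormula α n :=
  BoundedFormula.iInf fun b : s => f b.1

/-- Disjunction over a finset. -/
noncomputable def finSup {α β : Type} {n : ℕ} (s : Finset β) (f : β → L.BoundedFormula α n) :
    L.BoundedFormula α n :=
  BoundedFormula.iSup fun b : s => f b.1

/-- Semantic "goodness" of a tuple. -/
def GoodTup (P : Type) [L.Structure P] (c : Fin k → P) {n : ℕ} (ys : Fin n → P) : Prop :=
  ∀ zs : Fin n → P, ∃ x : P,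
    Formula.Realize φ (Sum.elim c fun _ => x) ∧ ∀ i, Fg.Realize ![x, ys i, zs i]

noncomputable def innerF (n : ℕ) :
    L.Formula (((Fin k ⊕ Fin n) ⊕ Fin n) ⊕ Fin 1) :=
  (φ.relabel (Sum.elim (fun j => Sum.inl (Sum.inl (Sum.inl j))) Sum.inr)) ⊓
    finInf Finset.univ fun i : Fin n =>
      Fg.relabel ![Sum.inr 0, Sum.inl (Sum.inl (Sum.inr i)), Sum.inl (Sum.inr i)]

noncomputable def goodF (n : ℕ) : L.Formula (Fin k ⊕ Fin n) :=
  Formula.iAlls (Fin n)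
    (Formula.iExs (Fin 1) (innerF Fg φ n))

lemma realize_iInf' {α β P : Type} [L.Structure P] {s : Finset β} {f : β → L.Formula α}
    {v : α → P} :
    Formula.Realize (finInf s f) v ↔ ∀ b ∈ s, Formula.Realize (f b) v :=
  by simp only [finInf, Formula.Realize, BoundedFormula.realize_iInf]
     exact ⟨fun h b hb => h ⟨b, hb⟩, fun h b => h b.1 b.2⟩

lemma realize_iSup' {α β P : Type} [L.Structure P] {s : Finset β} {f : β → L.Formula α}
    {v : α → P} :
    Formula.Realize (finSup s f) v ↔ ∃ b ∈ s, Formula.Realize (f b) v :=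
  by simp only [finSup, Formula.Realize, BoundedFormula.realize_iSup]
     exact ⟨fun ⟨b, hb⟩ => ⟨b.1, b.2, hb⟩, fun ⟨b, hb, h⟩ => ⟨⟨b, hb⟩, h⟩⟩

lemma realize_innerF {P : Type} [L.Structure P] (c : Fin k → P) {n : ℕ}
    (ys zs : Fin n → P) (xf : Fin 1 → P) :
    (innerF Fg φ n).Realize (Sum.elim (Sum.elim (Sum.elim c ys) zs) xf) ↔
      (Formula.Realize φ (Sum.elim c fun _ => xf 0) ∧ ∀ i, Fg.Realize ![xf 0, ys i, zs i]) := by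
  rw [innerF, Formula.realize_inf, Formula.realize_relabel, realize_iInf']
  constructor
  · rintro ⟨h1, h2⟩
    constructor
    · convert h1 using 2
      funext s
      rcases s with j | x
      · rfl
      · simp [Fin.eq_zero x]
    · intro i
      have := h2 i (Finset.mem_univ i)
      rw [Formula.realize_relabel] at this
      convert this using 2
      funext j
      fin_cases j <;> simp [Fin.eq_zero]
  · rintro ⟨h1, h2⟩
    constructor
    · convert h1 using 2
      funext s
      rcases s with j | x
      · rfl
      · simp [Fin.eq_zero x]
    · intro i _
      rw [Formula.realize_relabel]
      convert h2 i using 2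
      funext j
      fin_cases j <;> simp [Fin.eq_zero]

lemma realize_goodF {P : Type} [L.Structure P] (c : Fin k → P) {n : ℕ} (ys : Fin n → P) :
    (goodF Fg φ n).Realize (Sum.elim c ys) ↔ GoodTup Fg φ P c ys := by
  rw [goodF, Formula.realize_iAlls]
  constructor
  · intro h zs
    obtain ⟨xf, hx⟩ := (Formula.realize_iExs.1 (h zs))
    exact ⟨xf 0, (realize_innerF Fg φ c ys zs xf).1 hx⟩
  · intro h zs
    obtain ⟨x, hx1, hx2⟩ := h zs
    rw [Formula.realize_iExs]
    refine ⟨fun _ => x, ?_⟩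
    have : (innerF Fg φ n).Realize (Sum.elim (Sum.elim (Sum.elim c ys) zs) fun _ => x) :=
      (realize_innerF Fg φ c ys zs fun _ => x).2 ⟨hx1, hx2⟩
    exact this


/-- Semantic badness. -/
def BadTup (P : Type) [L.Structure P] (c : Fin k → P) {n : ℕ} (ys : Fin n → P) : Prop :=
  Function.Injective ys ∧ ¬ GoodTup Fg φ P c ys

noncomputable def badF (n : ℕ) : L.Formula (Fin k ⊕ Fin n) :=
  (finInf Finset.univ.offDiag fun p : Fin n × Fin n =>
    (Term.equal (Term.var (Sum.inr p.1)) (Term.var (Sum.inr p.2))).not) ⊓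
    (goodF Fg φ n).not

lemma realize_badF {P : Type} [L.Structure P] (c : Fin k → P) {n : ℕ} (ys : Fin n → P) :
    (badF Fg φ n).Realize (Sum.elim c ys) ↔ BadTup Fg φ P c ys := by
  rw [badF, Formula.realize_inf, Formula.realize_not, realize_goodF, realize_iInf']
  apply and_congr_left'
  constructor
  · intro h i j hij
    by_contra hne
    have := h (i, j) (Finset.mem_offDiag.2 ⟨Finset.mem_univ _, Finset.mem_univ _, hne⟩)
    rw [Formula.realize_not, Formula.realize_equal] at this
    exact this hij
  · intro h p hp
    rw [Formula.realize_not, Formula.realize_equal]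
    intro heq
    exact (Finset.mem_offDiag.1 hp).2.2 (h heq)

noncomputable def coverF (n m : ℕ) : L.Formula (Fin k) :=
  Formula.iExs (Fin m) <|
    Formula.iAlls (Fin n) <|
      (((badF Fg φ n).relabel
          (Sum.elim (fun j => Sum.inl (Sum.inl j)) Sum.inr)).imp
        (finSup Finset.univ fun p : Fin n × Fin m =>
          Term.equal (Term.var (Sum.inr p.1)) (Term.var (Sum.inl (Sum.inr p.2)))))

lemma realize_coverF {P : Type} [L.Structure P] (c : Fin k → P) {n m : ℕ} :
    (coverF Fg φ n m).Realize c ↔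
      ∃ us : Fin m → P, ∀ ys : Fin n → P, BadTup Fg φ P c ys →
        ∃ i : Fin n, ∃ j : Fin m, ys i = us j := by
  rw [coverF, Formula.realize_iExs]
  apply exists_congr
  intro us
  rw [Formula.realize_iAlls]
  apply forall_congr'
  intro ys
  have : (fun a => Sum.elim (Sum.elim c us) ys a) =
      Sum.elim (Sum.elim c us) ys := by
    funext s; rcases s with s | x; · rcases s with s | z <;> rfl
    · rfl
  rw [this, Formula.realize_imp, Formula.realize_relabel]
  have h2 : (Sum.elim (Sum.elim c us) ys ∘ Sum.elim (fun j => Sum.inl (Sum.inl j)) Sum.inr :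
      Fin k ⊕ Fin n → P) = Sum.elim c ys := by
    funext s; rcases s with s | x <;> rfl
  rw [h2, realize_badF]
  apply imp_congr_right
  intro _
  rw [realize_iSup']
  constructor
  · rintro ⟨⟨i, j⟩, -, hb⟩
    rw [Formula.realize_equal] at hb
    exact ⟨i, j, hb⟩
  · rintro ⟨i, j, hb⟩
    exact ⟨(i, j), Finset.mem_univ _, by rw [Formula.realize_equal]; exact hb⟩


/-- "v is distinct from the parameter a" -/
noncomputable def neqF {N : Type} (A : Set N) (a : ↥A) : L.Formula (↥A ⊕ Fin 1) :=
  (Term.equal (Term.var (Sum.inl a)) (Term.var (Sum.inr 0))).not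

lemma realize_neqF {N : Type} [L.Structure N] (A : Set N) (a : ↥A) (v : N) :
    (neqF (L := L) A a).Realize (Sum.elim Subtype.val fun _ => v) ↔ a.val ≠ v := by
  rw [neqF, Formula.realize_not, Formula.realize_equal]
  simp

noncomputable def psiF (n t : ℕ) {N : Type} (A : Set N) (pa : Fin k → ↥A)
    (prev : Fin n → ↥A) (F : Finset ↥A) : L.Formula (↥A ⊕ Fin 1) :=
  Formula.iExs (Fin n) <|
    ((badF Fg φ n).relabel (Sum.elim (fun j => Sum.inl (Sum.inl (pa j))) Sum.inr)) ⊓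
    finInf Finset.univ (fun i : Fin n =>
      if i.val < t then Term.equal (Term.var (Sum.inr i)) (Term.var (Sum.inl (Sum.inl (prev i))))
      else if i.val = t then Term.equal (Term.var (Sum.inr i)) (Term.var (Sum.inl (Sum.inr 0)))
      else (finInf F fun f =>
              (Term.equal (Term.var (Sum.inr i)) (Term.var (Sum.inl (Sum.inl f)))).not) ⊓
           (Term.equal (Term.var (Sum.inr i)) (Term.var (Sum.inl (Sum.inr 0)))).not)

lemma realize_psiF {N : Type} [L.Structure N] (n t : ℕ) (A : Set N) (pa : Fin k → ↥A)
    (prev : Fin n → ↥A) (F : Finset ↥A) (v : N) :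
    (psiF Fg φ n t A pa prev F).Realize (Sum.elim Subtype.val fun _ => v) ↔
      ∃ ws : Fin n → N, BadTup Fg φ N (fun j => (pa j).val) ws ∧ ∀ i : Fin n,
        (i.val < t → ws i = (prev i).val) ∧ (i.val = t → ws i = v) ∧
        (t < i.val → (∀ f ∈ F, ws i ≠ f.val) ∧ ws i ≠ v) := by
  rw [psiF, Formula.realize_iExs]
  apply exists_congr
  intro ws
  have hval : (fun a => Sum.elim (Sum.elim (Subtype.val : ↥A → N) fun _ : Fin 1 => v) ws (id a)) =
      Sum.elim (Sum.elim Subtype.val fun _ : Fin 1 => v) ws := by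
    funext s; rcases s with s | x <;> rfl
  rw [Formula.realize_inf, Formula.realize_relabel]
  have h2 : (Sum.elim (Sum.elim (Subtype.val : ↥A → N) fun _ : Fin 1 => v) ws ∘
      Sum.elim (fun j => Sum.inl (Sum.inl (pa j))) Sum.inr : Fin k ⊕ Fin n → N) =
      Sum.elim (fun j => (pa j).val) ws := by
    funext s; rcases s with s | x <;> rfl
  rw [h2, realize_badF, realize_iInf']
  apply and_congr_right'
  constructor
  · intro h i
    have hi := h i (Finset.mem_univ i)
    refine ⟨fun hlt => ?_, fun heq => ?_, fun hgt => ?_⟩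
    · rw [if_pos hlt, Formula.realize_equal] at hi
      simpa using hi
    · rw [if_neg (by omega), if_pos heq, Formula.realize_equal] at hi
      simpa using hi
    · rw [if_neg (by omega), if_neg (by omega), Formula.realize_inf] at hi
      obtain ⟨hi1, hi2⟩ := hi
      rw [realize_iInf'] at hi1
      rw [Formula.realize_not, Formula.realize_equal] at hi2
      refine ⟨fun f hf => ?_, ?_⟩
      · have := hi1 f hf
        rw [Formula.realize_not, Formula.realize_equal] at this
        simpa [eq_comm] using this
      · simpa [eq_comm] using hi2
  · intro h i _
    obtain ⟨h1, h2, h3⟩ := h i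
    split_ifs with hlt heq
    · rw [Formula.realize_equal]
      simpa using h1 hlt
    · rw [Formula.realize_equal]
      simpa using h2 heq
    · have hgt : t < i.val := by omega
      obtain ⟨h4, h5⟩ := h3 hgt
      rw [Formula.realize_inf]
      constructor
      · rw [realize_iInf']
        intro f hf
        rw [Formula.realize_not, Formula.realize_equal]
        simpa [eq_comm] using h4 f hf
      · rw [Formula.realize_not, Formula.realize_equal]
        simpa [eq_comm] using h5


lemma exists_finset_cover {N : Type} [L.Structure N] (hsat : AlephOneSaturated L N)
    (A₁ : Set N) (hA₁c : A₁.Countable) (pa : Fin k → N)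
    (hbig : ∀ (n : ℕ) (as : Fin n → N), Function.Injective as → (∀ i, as i ∉ A₁) →
      GoodTup Fg φ N pa as) (n : ℕ) :
    ∃ FS : Finset N, ∀ ys : Fin n → N, BadTup Fg φ N pa ys → ∃ i, ys i ∈ FS := by
  classical
  by_contra hcon
  push_neg at hcon
  obtain ⟨w₀, -⟩ := hbig 0 (fun i => i.elim0) (fun a => a.elim0) (fun i => i.elim0)
    (fun i => i.elim0)
  set A' : Set N := (A₁ ∪ Set.range pa) ∪ {w₀} with hA'def
  have hA'c : A'.Countable :=
    ((hA₁c.union (Set.finite_range pa).countable).union (Set.countable_singleton w₀))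
  have main : ∀ t : ℕ, ∀ ht : t ≤ n, ∃ ys : Fin t → N, (∀ i, ys i ∉ A') ∧
      ∀ F : Finset N, ↑F ⊆ A' ∪ Set.range ys →
        ∃ ws : Fin n → N, BadTup Fg φ N pa ws ∧
          (∀ i : Fin t, ws (Fin.castLE ht i) = ys i) ∧
          ∀ j : Fin n, t ≤ j.val → ws j ∉ F := by
    intro t
    induction t with
    | zero =>
      intro ht
      refine ⟨fun i => i.elim0, fun i => i.elim0, fun F _ => ?_⟩
      obtain ⟨ys, hbad, hnot⟩ := hcon F
      exact ⟨ys, hbad, fun i => i.elim0, fun j _ => hnot j⟩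
    | succ t IH =>
      intro ht
      have ht' : t ≤ n := le_trans (Nat.le_succ t) ht
      have htn : t < n := ht
      obtain ⟨ys, hysA, hinv⟩ := IH ht'
      set At : Set N := A' ∪ Set.range ys with hAtdef
      have hAtc : At.Countable := hA'c.union (Set.finite_range ys).countable
      have hpaAt : ∀ j, pa j ∈ At := fun j => Or.inl (Or.inl (Or.inr ⟨j, rfl⟩))
      set paA : Fin k → ↥At := fun j => ⟨pa j, hpaAt j⟩ with hpaAdef
      have hw₀ : w₀ ∈ At := Or.inl (Or.inr rfl)
      set prev : Fin n → ↥At := fun i =>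
        if h : i.val < t then ⟨ys ⟨i.val, h⟩, Or.inr ⟨_, rfl⟩⟩ else ⟨w₀, hw₀⟩ with hprevdef
      set S : Set (L.Formula (↥At ⊕ Fin 1)) :=
        Set.range (neqF At) ∪ Set.range (psiF Fg φ n t At paA prev) with hSdef
      have hfin : ∀ S₀ : Finset (L.Formula (↥At ⊕ Fin 1)), ↑S₀ ⊆ S →
          ∃ x : N, ∀ ψ ∈ S₀, Formula.Realize ψ (Sum.elim Subtype.val fun _ => x) := by
        intro S₀ hS₀
        set dataOf : L.Formula (↥At ⊕ Fin 1) → Finset N := fun ψ =>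
          (if h : ∃ aa : ↥At, neqF At aa = ψ then {(Classical.choose h).val} else ∅) ∪
          (if h : ∃ F : Finset ↥At, psiF Fg φ n t At paA prev F = ψ then
              (Classical.choose h).image Subtype.val else ∅) with hdataOf
        set FS₀ : Finset N := S₀.biUnion dataOf with hFS₀def
        have hFS₀ : ↑FS₀ ⊆ A' ∪ Set.range ys := by
          intro x hx
          rw [hFS₀def] at hx
          simp only [Finset.coe_biUnion, Set.mem_iUnion, Finset.mem_coe,
            Finset.mem_biUnion] at hx
          obtain ⟨ψ, _, hx⟩ := hx
          rw [hdataOf] at hx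
          simp only [Finset.mem_union] at hx
          rcases hx with hx | hx
          · by_cases h : ∃ aa : ↥At, neqF At aa = ψ
            · rw [dif_pos h, Finset.mem_singleton] at hx
              rw [hx]
              exact (Classical.choose h).2
            · rw [dif_neg h] at hx
              exact absurd hx (Finset.notMem_empty x)
          · by_cases h : ∃ F : Finset ↥At, psiF Fg φ n t At paA prev F = ψ
            · rw [dif_pos h, Finset.mem_image] at hx
              obtain ⟨f, _, rfl⟩ := hx
              exact f.2
            · rw [dif_neg h] at hx
              exact absurd hx (Finset.notMem_empty x)
        obtain ⟨ws, hwbad, hwpre, hwnot⟩ := hinv FS₀ hFS₀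
        refine ⟨ws ⟨t, htn⟩, ?_⟩
        intro ψ hψmem
        rcases hS₀ hψmem with hr | hr
        · obtain ⟨aa, haa⟩ := hr
          have hex : ∃ aa' : ↥At, neqF At aa' = ψ := ⟨aa, haa⟩
          have hspec := Classical.choose_spec hex
          rw [← hspec, realize_neqF]
          intro heq
          have hmem : (Classical.choose hex).val ∈ FS₀ := by
            rw [hFS₀def]
            refine Finset.mem_biUnion.2 ⟨ψ, hψmem, ?_⟩
            rw [hdataOf]
            simp only [Finset.mem_union]
            left
            rw [dif_pos hex]
            exact Finset.mem_singleton_self _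
          exact hwnot ⟨t, htn⟩ le_rfl (heq ▸ hmem)
        · obtain ⟨F, hF⟩ := hr
          have hex : ∃ F' : Finset ↥At, psiF Fg φ n t At paA prev F' = ψ := ⟨F, hF⟩
          have hspec := Classical.choose_spec hex
          set F' := Classical.choose hex with hF'def
          rw [← hspec, realize_psiF]
          refine ⟨ws, hwbad, ?_⟩
          intro i
          refine ⟨fun hlt => ?_, fun heqt => ?_, fun hgt => ?_⟩
          · have := hwpre ⟨i.val, hlt⟩
            have hci : Fin.castLE ht' ⟨i.val, hlt⟩ = i := Fin.ext rfl
            rw [hci] at this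
            rw [this, hprevdef]
            simp only [dif_pos hlt]
          · have hi : i = ⟨t, htn⟩ := Fin.ext heqt
            rw [hi]
          · constructor
            · intro f hf heq
              have hmem : f.val ∈ FS₀ := by
                rw [hFS₀def]
                refine Finset.mem_biUnion.2 ⟨ψ, hψmem, ?_⟩
                rw [hdataOf]
                simp only [Finset.mem_union]
                right
                rw [dif_pos hex]
                exact Finset.mem_image.2 ⟨f, hf, rfl⟩
              exact hwnot i (le_of_lt hgt) (heq ▸ hmem)
            · intro heq
              have : i = ⟨t, htn⟩ := hwbad.1 heq
              rw [this] at hgt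
              exact lt_irrefl t hgt
      obtain ⟨v, hv⟩ := hsat At hAtc S hfin
      have hvneq : ∀ x ∈ At, v ≠ x := by
        intro x hx heq
        exact (realize_neqF At ⟨x, hx⟩ v).1 (hv _ (Or.inl ⟨⟨x, hx⟩, rfl⟩)) heq.symm
      set ys' : Fin (t + 1) → N := fun i =>
        if h : i.val < t then ys ⟨i.val, h⟩ else v with hys'def
      refine ⟨ys', ?_, ?_⟩
      · intro i
        show ys' i ∉ A'
        by_cases h : i.val < t
        · have he : ys' i = ys ⟨i.val, h⟩ := by simp [hys'def, h]
          rw [he]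
          exact hysA _
        · have he : ys' i = v := by simp [hys'def, h]
          rw [he]
          exact fun hmem => hvneq v (Or.inl hmem) rfl
      · intro F' hF'
        set F₀ : Finset ↥At := (F'.erase v).subtype (· ∈ At) with hF₀def
        have hpsi := hv (psiF Fg φ n t At paA prev F₀) (Or.inr ⟨F₀, rfl⟩)
        rw [realize_psiF] at hpsi
        obtain ⟨ws, hwbad, hwcond⟩ := hpsi
        refine ⟨ws, hwbad, ?_, ?_⟩
        · intro i
          show ws (Fin.castLE ht i) = ys' i
          by_cases hi : i.val < t
          · have h1 : ws (Fin.castLE ht i) = (prev (Fin.castLE ht i)).val :=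
              (hwcond _).1 hi
            have h2 : (prev (Fin.castLE ht i)).val = ys ⟨i.val, hi⟩ := by
              simp only [hprevdef, Fin.coe_castLE]
              rw [dif_pos hi]
            have h3 : ys' i = ys ⟨i.val, hi⟩ := by simp [hys'def, hi]
            rw [h1, h2, h3]
          · have hiv : i.val = t := by
              have := i.isLt
              omega
            have h1 : ws (Fin.castLE ht i) = v := (hwcond _).2.1 hiv
            have h3 : ys' i = v := by simp [hys'def, hi]
            rw [h1, h3]
        · intro j hj
          have hgt : t < j.val := hj
          obtain ⟨hne1, hne2⟩ := (hwcond j).2.2 hgt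
          intro hmem
          by_cases hveq : ws j = v
          · exact hne2 hveq
          · have hmem' : ws j ∈ F'.erase v := Finset.mem_erase.2 ⟨hveq, hmem⟩
            have hwsAt : ws j ∈ At := by
              rcases hF' hmem with h | ⟨i, hi⟩
              · exact Or.inl h
              · simp only [hys'def] at hi
                by_cases hi2 : i.val < t
                · rw [dif_pos hi2] at hi
                  exact Or.inr ⟨⟨i.val, hi2⟩, hi⟩
                · rw [dif_neg hi2] at hi
                  exact absurd hi.symm hveq
            exact hne1 ⟨ws j, hwsAt⟩ (Finset.mem_subtype.2 hmem') rfl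
  obtain ⟨ys, hysA, hinv⟩ := main n le_rfl
  obtain ⟨ws, hwbad, hwpre, -⟩ := hinv ∅ (by simp)
  have hws : ∀ j : Fin n, ws j = ys j := by
    intro j
    have := hwpre j
    rwa [show Fin.castLE le_rfl j = j from Fin.ext rfl] at this
  apply hwbad.2
  apply hbig n ws hwbad.1
  intro i hmem
  rw [hws i] at hmem
  exact hysA i (Or.inl (Or.inl hmem))


lemma bigWitness_transfer (L : FirstOrder.Language.{0,0}) (Fg : L.Formula (Fin 3))
    {M : Type} [L.Structure M] {k : ℕ} (φ : L.Formula (Fin k ⊕ Fin 1)) (a : Fin k → M)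
    {N₁ : Type} [L.Structure N₁] (e₁ : M ↪ₑ[L] N₁)
    (hsat₁ : AlephOneSaturated L N₁) (h₁ : BigWitness L Fg e₁ φ a)
    {N₂ : Type} [L.Structure N₂] (e₂ : M ↪ₑ[L] N₂) :
    BigWitness L Fg e₂ φ a := by
  obtain ⟨A₁, hA₁c, hA₁⟩ := h₁
  have hbig1 : ∀ (n : ℕ) (as : Fin n → N₁), Function.Injective as →
      (∀ i, as i ∉ A₁) → GoodTup Fg φ N₁ (fun i => e₁ (a i)) as :=
    fun n as h1 h2 zs => hA₁ n as h1 h2 zs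
  have cover := exists_finset_cover Fg φ hsat₁ A₁ hA₁c (fun i => e₁ (a i)) hbig1
  have cov2 : ∀ n : ℕ, ∃ m : ℕ, ∃ us : Fin m → N₂, ∀ ys : Fin n → N₂,
      BadTup Fg φ N₂ (fun i => e₂ (a i)) ys → ∃ i, ∃ j, ys i = us j := by
    intro n
    obtain ⟨FS, hFS⟩ := cover n
    have h1 : (coverF Fg φ n FS.card).Realize (fun i => e₁ (a i)) := by
      rw [realize_coverF]
      refine ⟨fun j => (FS.equivFin.symm j).val, ?_⟩
      intro ys hbad
      obtain ⟨i, hi⟩ := hFS ys hbad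
      exact ⟨i, FS.equivFin ⟨ys i, hi⟩, by simp⟩
    have h2 : (coverF Fg φ n FS.card).Realize a := (e₁.map_formula _ a).mp h1
    have h3 : (coverF Fg φ n FS.card).Realize (fun i => e₂ (a i)) :=
      (e₂.map_formula _ a).mpr h2
    rw [realize_coverF] at h3
    obtain ⟨us, hus⟩ := h3
    exact ⟨FS.card, us, hus⟩
  choose m us hus using cov2
  refine ⟨⋃ n, Set.range (us n),
    Set.countable_iUnion (fun n => (Set.finite_range _).countable), ?_⟩
  intro n as hinj hnot bs
  by_cases hgood : GoodTup Fg φ N₂ (fun i => e₂ (a i)) as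
  · exact hgood bs
  · have hb : BadTup Fg φ N₂ (fun i => e₂ (a i)) as := ⟨hinj, hgood⟩
    obtain ⟨i, j, hij⟩ := hus n as hb
    have hmem : as i ∈ ⋃ n', Set.range (us n') :=
      Set.mem_iUnion.2 ⟨n, Set.mem_range.2 ⟨j, hij.symm⟩⟩
    exact absurd hmem (hnot i)

end BigAux


/-- Under the standing assumptions, `Γ^sind_F`-bigness does not
depend on the choice of `|T|⁺`-saturated elementary extension: if the witnessing
condition holds in some `|T|⁺`-saturated elementary extension of `M`, then it holds
in every such extension. -/
theorem bigWitness_independent_of_saturated_extension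
    (L : FirstOrder.Language.{0, 0}) (ltS : L.Relations 2) (zeroS : L.Constants)
    (succS : L.Functions 1) (T : L.Theory) (Fg : L.Formula (Fin 3))
    (h : StandingAssumptions L ltS zeroS succS T Fg)
    (M : Type) [L.Structure M] (hM : M ⊨ T)
    (k : ℕ) (φ : L.Formula (Fin k ⊕ Fin 1)) (a : Fin k → M)
    (N₁ : Type) [L.Structure N₁] (e₁ : M ↪ₑ[L] N₁)
    (hsat₁ : AlephOneSaturated L N₁) (h₁ : BigWitness L Fg e₁ φ a)
    (N₂ : Type) [L.Structure N₂] (e₂ : M ↪ₑ[L] N₂)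
    (hsat₂ : AlephOneSaturated L N₂) :
    BigWitness L Fg e₂ φ a :=
  BigAux.bigWitness_transfer L Fg φ a e₁ hsat₁ h₁ e₂
end
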